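/- Let R be a commutative ring with a multiplicative subset S such that R is S-Noetherian. Let T be the ring of 2×2 upper triangular matrices over R and S' = { diag(s, s) : s ∈ S } ⊆ T. Then T is right S'-Noetherian. -/

import Mathlib

open MulOpposite

/-- `N` is an `S`-finite submodule of the right `R`-module `M`
(where right `R`-modules are modeled as `R`ᵐᵒᵖ-modules, so that
`(op s) • n = n * s` when `M = R`). -/
def SFinite {R : Type*} [Ring R] {M : Type*} [AddCommGroup M] [Module Rᵐᵒᵖ M]
    (S : Set R) (N : Submodule Rᵐᵒᵖ M) : Prop :=
  ∃ s ∈ S, ∃ F : Submodule Rᵐᵒᵖ M, F.FG ∧ F ≤ N ∧ ∀ n ∈ N, (op s) • n ∈ F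

/-- The ring of 2×2 upper triangular matrices over `R`. -/
def upperTri (R : Type*) [CommRing R] : Subring (Matrix (Fin 2) (Fin 2) R) where
  carrier := {A | A 1 0 = 0}
  mul_mem' {A B} hA hB := by
    show (A * B) 1 0 = 0
    simp only [Set.mem_setOf_eq] at hA hB
    simp [Matrix.mul_apply, Fin.sum_univ_two, hA, hB]
  one_mem' := by simp [Set.mem_setOf_eq, Matrix.one_apply]
  add_mem' {A B} hA hB := by
    simp only [Set.mem_setOf_eq] at *
    simp [Matrix.add_apply, hA, hB]
  zero_mem' := by simp
  neg_mem' {A} hA := by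
    simp only [Set.mem_setOf_eq] at *
    simp [hA]

section Aux
variable {R : Type*} [CommRing R]

lemma mem_upperTri {A : Matrix (Fin 2) (Fin 2) R} : A ∈ upperTri R ↔ A 1 0 = 0 := Iff.rfl

/-- scalar matrix as element of `upperTri R` -/
def sM (r : R) : upperTri R :=
  ⟨r • (1 : Matrix (Fin 2) (Fin 2) R), by
    simp [mem_upperTri, Matrix.one_apply]⟩

@[simp] lemma sM_coe (r : R) : ((sM r : upperTri R) : Matrix (Fin 2) (Fin 2) R) = r • 1 := rfl

lemma mul_sM_apply (X : upperTri R) (r : R) (i j : Fin 2) :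
    ((X * sM r : upperTri R) : Matrix (Fin 2) (Fin 2) R) i j
      = r * (X : Matrix (Fin 2) (Fin 2) R) i j := by
  show ((X : Matrix (Fin 2) (Fin 2) R) * (r • 1)) i j = _
  rw [Matrix.mul_smul, Matrix.mul_one, Matrix.smul_apply, smul_eq_mul]

lemma sM_mul_sM (a b : R) : (sM a * sM b : upperTri R) = sM (a * b) := by
  apply Subtype.ext
  show (a • (1 : Matrix (Fin 2) (Fin 2) R)) * (b • 1) = (a * b) • 1
  rw [Matrix.smul_mul, Matrix.mul_smul, Matrix.mul_one, smul_smul]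

/-- the matrix with `b` at `(0,1)` and zeros elsewhere -/
def Etri (b : R) : upperTri R :=
  ⟨Matrix.single 0 1 b, by simp [mem_upperTri, Matrix.single]⟩

@[simp] lemma Etri_coe (b : R) :
    ((Etri b : upperTri R) : Matrix (Fin 2) (Fin 2) R) = Matrix.single 0 1 b := rfl

lemma Etri_mul_sM (b r : R) : (Etri b * sM r : upperTri R) = Etri (r * b) := by
  apply Subtype.ext
  ext i j
  rw [show ((Etri b * sM r : upperTri R) : Matrix (Fin 2) (Fin 2) R) i j
      = r * ((Etri b : upperTri R) : Matrix (Fin 2) (Fin 2) R) i j from mul_sM_apply _ _ _ _]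
  simp [Matrix.single, mul_ite]

lemma eq_Etri (D : upperTri R)
    (h11 : (D : Matrix (Fin 2) (Fin 2) R) 1 1 = 0)
    (h00 : (D : Matrix (Fin 2) (Fin 2) R) 0 0 = 0) :
    D = Etri ((D : Matrix (Fin 2) (Fin 2) R) 0 1) := by
  apply Subtype.ext
  have h10 : (D : Matrix (Fin 2) (Fin 2) R) 1 0 = 0 := D.2
  ext i j
  fin_cases i <;> fin_cases j <;>
    simp [Matrix.single, h11, h00, h10]

end Aux

theorem upperTri_S_noetherian {R : Type*} [CommRing R] (S : Set R)
    (hS1 : (1 : R) ∈ S) (hSmul : ∀ a ∈ S, ∀ b ∈ S, a * b ∈ S)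
    (hSN : ∀ I : Ideal R, ∃ s ∈ S, ∃ J : Ideal R, J.FG ∧ J ≤ I ∧ ∀ x ∈ I, x * s ∈ J) :
    ∀ I : Submodule (upperTri R)ᵐᵒᵖ (upperTri R),
      SFinite {t : upperTri R | ∃ s ∈ S,
        (t : Matrix (Fin 2) (Fin 2) R) = s • (1 : Matrix (Fin 2) (Fin 2) R)} I := by
  intro I
  have opsmul : ∀ (t A : upperTri R), op t • A = A * t := fun _ _ => rfl
  -- the three ideals of R
  let I₂ : Ideal R :=
    { carrier := {x | ∃ A, A ∈ I ∧ ((A : upperTri R) : Matrix (Fin 2) (Fin 2) R) 1 1 = x}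
      add_mem' := by
        rintro a b ⟨A, hA, rfl⟩ ⟨B, hB, rfl⟩
        exact ⟨A + B, I.add_mem hA hB, rfl⟩
      zero_mem' := ⟨0, I.zero_mem, rfl⟩
      smul_mem' := by
        rintro c x ⟨A, hA, rfl⟩
        refine ⟨A * sM c, ?_, mul_sM_apply A c 1 1⟩
        exact I.smul_mem (op (sM c)) hA }
  let K₀ : Ideal R :=
    { carrier := {x | ∃ A, A ∈ I ∧ ((A : upperTri R) : Matrix (Fin 2) (Fin 2) R) 1 1 = 0 ∧
        ((A : upperTri R) : Matrix (Fin 2) (Fin 2) R) 0 0 = x}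
      add_mem' := by
        rintro a b ⟨A, hA, hA1, rfl⟩ ⟨B, hB, hB1, rfl⟩
        refine ⟨A + B, I.add_mem hA hB, ?_, rfl⟩
        show ((A : upperTri R) : Matrix (Fin 2) (Fin 2) R) 1 1 + _ = 0
        rw [hA1, hB1, add_zero]
      zero_mem' := ⟨0, I.zero_mem, rfl, rfl⟩
      smul_mem' := by
        rintro c x ⟨A, hA, hA1, rfl⟩
        refine ⟨A * sM c, I.smul_mem (op (sM c)) hA, ?_, mul_sM_apply A c 0 0⟩
        rw [mul_sM_apply A c 1 1, hA1, mul_zero] }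
  let K₁ : Ideal R :=
    { carrier := {b | Etri b ∈ I}
      add_mem' := by
        intro a b ha hb
        have : Etri (a + b) = Etri a + Etri b := by
          apply Subtype.ext; simp [Matrix.single_add]
        rw [Set.mem_setOf_eq, this]
        exact I.add_mem ha hb
      zero_mem' := by
        show Etri (0 : R) ∈ I
        have : Etri (0 : R) = 0 := by apply Subtype.ext; simp
        rw [this]; exact I.zero_mem
      smul_mem' := by
        intro c b hb
        show Etri (c • b) ∈ I
        rw [show (c • b : R) = c * b from rfl, ← Etri_mul_sM]
        exact I.smul_mem (op (sM c)) hb }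
  obtain ⟨s₂, hs₂, J₂, ⟨G₂, hG₂⟩, hJ₂le, hJ₂⟩ := hSN I₂
  obtain ⟨s₀, hs₀, J₀, ⟨G₀, hG₀⟩, hJ₀le, hJ₀⟩ := hSN K₀
  obtain ⟨s₁, hs₁, J₁, ⟨G₁, hG₁⟩, hJ₁le, hJ₁⟩ := hSN K₁
  -- lifts of generators
  have h2 : ∀ g : G₂, ∃ A, A ∈ I ∧ ((A : upperTri R) : Matrix (Fin 2) (Fin 2) R) 1 1 = (g : R) := by
    intro g
    exact hJ₂le (hG₂ ▸ Ideal.subset_span g.2)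
  choose f₂ hf₂I hf₂e using h2
  have h0 : ∀ g : G₀, ∃ A, A ∈ I ∧ ((A : upperTri R) : Matrix (Fin 2) (Fin 2) R) 1 1 = 0 ∧
      ((A : upperTri R) : Matrix (Fin 2) (Fin 2) R) 0 0 = (g : R) := by
    intro g
    exact hJ₀le (hG₀ ▸ Ideal.subset_span g.2)
  choose f₀ hf₀I hf₀e1 hf₀e0 using h0
  -- the finitely generated submodule
  let gens : Set (upperTri R) := Set.range f₂ ∪ Set.range f₀ ∪ (fun c => Etri c) '' (G₁ : Set R)
  let F : Submodule (upperTri R)ᵐᵒᵖ (upperTri R) := Submodule.span (upperTri R)ᵐᵒᵖ gens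
  have hFfg : F.FG := Submodule.fg_span (by
    apply Set.Finite.union
    apply Set.Finite.union
    · exact Set.finite_range f₂
    · exact Set.finite_range f₀
    · exact (G₁.finite_toSet).image _)
  have hFle : F ≤ I := by
    apply Submodule.span_le.mpr
    rintro x (( ⟨g, rfl⟩ | ⟨g, rfl⟩) | ⟨c, hc, rfl⟩)
    · exact hf₂I g
    · exact hf₀I g
    · exact hJ₁le (hG₁ ▸ Ideal.subset_span hc)
  -- claim 1
  have claim2 : ∀ x ∈ J₂, ∃ D, D ∈ F ∧ D ∈ I ∧ ((D : upperTri R) : Matrix (Fin 2) (Fin 2) R) 1 1 = x := by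
    intro x hx
    rw [← hG₂] at hx
    induction hx using Submodule.span_induction with
    | mem g hg =>
        exact ⟨f₂ ⟨g, hg⟩, Submodule.subset_span (Or.inl (Or.inl ⟨⟨g, hg⟩, rfl⟩)),
          hf₂I _, hf₂e _⟩
    | zero => exact ⟨0, F.zero_mem, I.zero_mem, rfl⟩
    | add a b _ _ iha ihb =>
        obtain ⟨D, hDF, hDI, hDe⟩ := iha
        obtain ⟨E, hEF, hEI, hEe⟩ := ihb
        exact ⟨D + E, F.add_mem hDF hEF, I.add_mem hDI hEI, by
          show ((D : upperTri R) : Matrix (Fin 2) (Fin 2) R) 1 1 + _ = _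
          rw [hDe, hEe]⟩
    | smul r x _ ih =>
        obtain ⟨D, hDF, hDI, hDe⟩ := ih
        refine ⟨D * sM r, F.smul_mem (op (sM r)) hDF, I.smul_mem (op (sM r)) hDI, ?_⟩
        rw [mul_sM_apply, hDe]; rfl
  have claim0 : ∀ x ∈ J₀, ∃ D, D ∈ F ∧ D ∈ I ∧
      ((D : upperTri R) : Matrix (Fin 2) (Fin 2) R) 1 1 = 0 ∧
      ((D : upperTri R) : Matrix (Fin 2) (Fin 2) R) 0 0 = x := by
    intro x hx
    rw [← hG₀] at hx
    induction hx using Submodule.span_induction with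
    | mem g hg =>
        exact ⟨f₀ ⟨g, hg⟩, Submodule.subset_span (Or.inl (Or.inr ⟨⟨g, hg⟩, rfl⟩)),
          hf₀I _, hf₀e1 _, hf₀e0 _⟩
    | zero => exact ⟨0, F.zero_mem, I.zero_mem, rfl, rfl⟩
    | add a b _ _ iha ihb =>
        obtain ⟨D, hDF, hDI, hD1, hD0⟩ := iha
        obtain ⟨E, hEF, hEI, hE1, hE0⟩ := ihb
        refine ⟨D + E, F.add_mem hDF hEF, I.add_mem hDI hEI, ?_, ?_⟩
        · show ((D : upperTri R) : Matrix (Fin 2) (Fin 2) R) 1 1 + _ = _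
          rw [hD1, hE1, add_zero]
        · show ((D : upperTri R) : Matrix (Fin 2) (Fin 2) R) 0 0 + _ = _
          rw [hD0, hE0]
    | smul r x _ ih =>
        obtain ⟨D, hDF, hDI, hD1, hD0⟩ := ih
        refine ⟨D * sM r, F.smul_mem (op (sM r)) hDF, I.smul_mem (op (sM r)) hDI, ?_, ?_⟩
        · rw [mul_sM_apply, hD1, mul_zero]
        · rw [mul_sM_apply, hD0]; rfl
  have claim1 : ∀ c ∈ J₁, Etri c ∈ F := by
    intro c hc
    rw [← hG₁] at hc
    induction hc using Submodule.span_induction with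
    | mem g hg => exact Submodule.subset_span (Or.inr ⟨g, hg, rfl⟩)
    | zero =>
        have : Etri (0 : R) = 0 := by apply Subtype.ext; simp
        rw [this]; exact F.zero_mem
    | add a b _ _ iha ihb =>
        have : Etri (a + b) = Etri a + Etri b := by
          apply Subtype.ext; simp [Matrix.single_add]
        rw [this]; exact F.add_mem iha ihb
    | smul r c _ ih =>
        rw [show (r • c : R) = r * c from rfl, ← Etri_mul_sM]
        exact F.smul_mem (op (sM r)) ih
  -- assemble
  refine ⟨sM (s₂ * s₀ * s₁), ⟨s₂ * s₀ * s₁, hSmul _ (hSmul _ hs₂ _ hs₀) _ hs₁, rfl⟩,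
    F, hFfg, hFle, ?_⟩
  intro A hA
  rw [opsmul]
  have hx2 : ((A : upperTri R) : Matrix (Fin 2) (Fin 2) R) 1 1 * s₂ ∈ J₂ := hJ₂ _ ⟨A, hA, rfl⟩
  obtain ⟨D, hDF, hDI, hDe⟩ := claim2 _ hx2
  set A' := A * sM s₂ - D with hA'
  have hA'I : A' ∈ I := I.sub_mem (I.smul_mem (op (sM s₂)) hA) hDI
  have hA'11 : ((A' : upperTri R) : Matrix (Fin 2) (Fin 2) R) 1 1 = 0 := by
    show ((A * sM s₂ : upperTri R) : Matrix (Fin 2) (Fin 2) R) 1 1 - _ = 0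
    rw [mul_sM_apply, hDe, mul_comm, sub_self]
  have hx0 : ((A' : upperTri R) : Matrix (Fin 2) (Fin 2) R) 0 0 * s₀ ∈ J₀ :=
    hJ₀ _ ⟨A', hA'I, hA'11, rfl⟩
  obtain ⟨B, hBF, hBI, hB1, hB0⟩ := claim0 _ hx0
  set A'' := A' * sM s₀ - B with hA''
  have hA''I : A'' ∈ I := I.sub_mem (I.smul_mem (op (sM s₀)) hA'I) hBI
  have hA''11 : ((A'' : upperTri R) : Matrix (Fin 2) (Fin 2) R) 1 1 = 0 := by
    show ((A' * sM s₀ : upperTri R) : Matrix (Fin 2) (Fin 2) R) 1 1 - _ = 0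
    rw [mul_sM_apply, hA'11, hB1, mul_zero, sub_zero]
  have hA''00 : ((A'' : upperTri R) : Matrix (Fin 2) (Fin 2) R) 0 0 = 0 := by
    show ((A' * sM s₀ : upperTri R) : Matrix (Fin 2) (Fin 2) R) 0 0 - _ = 0
    rw [mul_sM_apply, hB0, mul_comm, sub_self]
  have hEq : A'' = Etri (((A'' : upperTri R) : Matrix (Fin 2) (Fin 2) R) 0 1) :=
    eq_Etri A'' hA''11 hA''00
  have hb : ((A'' : upperTri R) : Matrix (Fin 2) (Fin 2) R) 0 1 ∈ K₁ := by
    show Etri _ ∈ I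
    rw [← hEq]; exact hA''I
  have hbs : ((A'' : upperTri R) : Matrix (Fin 2) (Fin 2) R) 0 1 * s₁ ∈ J₁ := hJ₁ _ hb
  have hfin : A'' * sM s₁ ∈ F := by
    have := claim1 _ hbs
    rw [show (((A'' : upperTri R) : Matrix (Fin 2) (Fin 2) R) 0 1 * s₁)
        = s₁ * ((A'' : upperTri R) : Matrix (Fin 2) (Fin 2) R) 0 1 from mul_comm _ _,
      ← Etri_mul_sM, ← hEq] at this
    exact this
  -- final computation
  have key : A * sM (s₂ * s₀ * s₁)
      = A'' * sM s₁ + B * sM s₁ + D * (sM s₀ * sM s₁) := by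
    have e1 : A * sM s₂ = A' + D := by rw [hA', sub_add_cancel]
    have e2 : A' * sM s₀ = A'' + B := by rw [hA'', sub_add_cancel]
    rw [← sM_mul_sM, ← sM_mul_sM, ← mul_assoc, ← mul_assoc, e1, add_mul, e2, add_mul,
      add_mul, mul_assoc]
  rw [key]
  refine F.add_mem (F.add_mem hfin ?_) ?_
  · exact F.smul_mem (op (sM s₁)) hBF
  · exact F.smul_mem (op (sM s₀ * sM s₁)) hDF
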